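/- On generators ℓ_n = z^{n+1}∂, the central form ψ̃ satisfies ψ̃(ℓ_n, ℓ_m) = q^{-4} [n+1][n][n−1] δ_{m+n,0}. -/
import Mathlib


open Finsupp

noncomputable section

/-- Laurent polynomials as finitely supported coefficient functions. -/
abbrev LP := ℤ →₀ ℝ

/-- q-number [m] = (q^m - q^{-m})/(q - q⁻¹). -/
def qn (q : ℝ) (m : ℤ) : ℝ := (q ^ m - q ^ (-m)) / (q - q⁻¹)

/-- Multiplication of Laurent polynomials. -/
def lmul (f g : LP) : LP := f.sum fun n a => g.sum fun m b => Finsupp.single (n + m) (a * b)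

/-- (τ f)(z) = f (q z). -/
def tau (q : ℝ) (f : LP) : LP := f.sum fun n a => Finsupp.single n (q ^ n * a)

/-- τ⁻¹. -/
def tauInv (q : ℝ) (f : LP) : LP := tau q⁻¹ f

/-- ∂_q f (z) = (f(qz) - f(q⁻¹z)) / ((q - q⁻¹) z), i.e. ∂_q z^n = [n] z^{n-1}. -/
def dq (q : ℝ) (f : LP) : LP := f.sum fun n a => Finsupp.single (n - 1) (qn q n * a)

/-- ∂ = ∂_q τ, so ∂ z^m = q^m [m] z^{m-1}. -/
def dd (q : ℝ) (f : LP) : LP := dq q (tau q f)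

/-- ∂̂ = ∂_q τ⁻¹. -/
def dhat (q : ℝ) (f : LP) : LP := dq q (tauInv q f)

/-- Residue: coefficient of z⁻¹. -/
def intg (f : LP) : ℝ := f (-1)


/-- ψ̃(f∂, g∂) = q⁻¹ ∫ (∂³ τ⁻³ f) g. -/
def psiT (q : ℝ) (f g : LP) : ℝ :=
  q⁻¹ * intg (lmul (dd q (dd q (dd q (tauInv q (tauInv q (tauInv q f)))))) g)


lemma tau_single (q : ℝ) (k : ℤ) (a : ℝ) :
    tau q (Finsupp.single k a) = Finsupp.single k (q ^ k * a) := by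
  unfold tau
  rw [Finsupp.sum_single_index (by rw [mul_zero, Finsupp.single_zero])]

lemma tauInv_single (q : ℝ) (k : ℤ) (a : ℝ) :
    tauInv q (Finsupp.single k a) = Finsupp.single k (q ^ (-k) * a) := by
  unfold tauInv
  rw [tau_single, inv_zpow, ← zpow_neg]

lemma dq_single (q : ℝ) (k : ℤ) (a : ℝ) :
    dq q (Finsupp.single k a) = Finsupp.single (k - 1) (qn q k * a) := by
  unfold dq
  rw [Finsupp.sum_single_index (by rw [mul_zero, Finsupp.single_zero])]

lemma dd_single (q : ℝ) (k : ℤ) (a : ℝ) :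
    dd q (Finsupp.single k a) = Finsupp.single (k - 1) (q ^ k * qn q k * a) := by
  unfold dd
  rw [tau_single, dq_single]
  congr 1
  ring

lemma lmul_single (k l : ℤ) (a b : ℝ) :
    lmul (Finsupp.single k a) (Finsupp.single l b) = Finsupp.single (k + l) (a * b) := by
  unfold lmul
  rw [Finsupp.sum_single_index, Finsupp.sum_single_index (by rw [mul_zero, Finsupp.single_zero])]
  rw [Finsupp.sum_single_index (by rw [zero_mul, Finsupp.single_zero]),
    zero_mul, Finsupp.single_zero]

theorem stmt12 (q : ℝ) (hq0 : q ≠ 0) (hq1 : q ≠ 1) (hqm1 : q ≠ -1) (n m : ℤ) :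
    psiT q (Finsupp.single (n + 1) (1 : ℝ)) (Finsupp.single (m + 1) (1 : ℝ))
      = q ^ (-4 : ℤ) * (qn q (n + 1) * qn q n * qn q (n - 1))
        * (if m + n = 0 then 1 else 0) := by
  simp only [psiT, tauInv_single, dd_single, lmul_single, intg, mul_one]
  have e1 : n + 1 - 1 = n := by ring
  have e2 : n - 1 - 1 = n - 2 := by ring
  rw [e1, e2, Finsupp.single_apply]
  have hc : (n - 2 + (m + 1) = -1) ↔ (m + n = 0) := by constructor <;> (intro h; omega)
  by_cases h : m + n = 0
  · rw [if_pos (hc.mpr h), if_pos h]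
    have key : q ^ (n - 1) * qn q (n - 1) * (q ^ n * qn q n *
        (q ^ (n + 1) * qn q (n + 1) * (q ^ (-(n + 1)) * (q ^ (-(n + 1)) * q ^ (-(n + 1))))))
        = (q ^ (n - 1) * q ^ n * q ^ (n + 1) * q ^ (-(n + 1)) * q ^ (-(n + 1)) * q ^ (-(n + 1)))
          * (qn q (n + 1) * qn q n * qn q (n - 1)) := by ring
    rw [key]
    have hz : (q ^ (n - 1) * q ^ n * q ^ (n + 1) * q ^ (-(n + 1)) * q ^ (-(n + 1)) * q ^ (-(n + 1)))
        = q ^ (-3 : ℤ) := by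
      rw [← zpow_add₀ hq0, ← zpow_add₀ hq0, ← zpow_add₀ hq0, ← zpow_add₀ hq0, ← zpow_add₀ hq0]
      congr 1
      ring
    rw [hz]
    have hq4 : q⁻¹ * q ^ (-3 : ℤ) = q ^ (-4 : ℤ) := by
      rw [← zpow_neg_one, ← zpow_add₀ hq0]; norm_num
    rw [← mul_assoc, hq4, mul_one]
  · rw [if_neg (fun hh => h (hc.mp hh)), if_neg h, mul_zero, mul_zero]
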